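/- Let λ ∈ ℝ, λ' < λ − 1/2, and let a, b : ℕ → L²-kernel norms with A² = ∑_n n! e^{2λn} a(n)², B² = ∑_n n! e^{2λn} b(n)². Then for the Wick product kernels c(n) = ∑_{m=0}^n a(n−m)·b(m) (with |Φ^{(n-m)} ⊗̂ Ψ^{(m)}|_{L²} ≤ a(n−m)b(m)), one has ∑_n n! e^{2λ'n} c(n)² ≤ C²_{λ,λ'} A² B² with C_{λ,λ'} = (2(λ−λ')−1)^{-1/2} e^{λ−λ'−1}. -/

import Mathlib

/-- Kernel-level Potthoff–Timpel estimate for the Wick product: with λ' < λ − ½ and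
Cauchy-product kernels c(n) = ∑_{m≤n} a(n−m) b(m),
∑ n! e^{2λ'n} c(n)² ≤ C²_{λ,λ'} (∑ n! e^{2λn} a(n)²)(∑ n! e^{2λn} b(n)²),
where C_{λ,λ'} = (2(λ−λ')−1)^{-1/2} e^{λ−λ'−1}. -/
theorem stmt9 (lam lam' : ℝ) (h : lam' < lam - 1 / 2)
    (a b : ℕ → ℝ) (ha : ∀ n, 0 ≤ a n) (hb : ∀ n, 0 ≤ b n)
    (hA : Summable (fun n : ℕ => (Nat.factorial n : ℝ) * Real.exp (2 * lam * n) * (a n) ^ 2))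
    (hB : Summable (fun n : ℕ => (Nat.factorial n : ℝ) * Real.exp (2 * lam * n) * (b n) ^ 2)) :
    ∑' n : ℕ, (Nat.factorial n : ℝ) * Real.exp (2 * lam' * n) *
        (∑ m ∈ Finset.range (n + 1), a (n - m) * b m) ^ 2
      ≤ (Real.exp (lam - lam' - 1) / Real.sqrt (2 * (lam - lam') - 1)) ^ 2 *
          (∑' n : ℕ, (Nat.factorial n : ℝ) * Real.exp (2 * lam * n) * (a n) ^ 2) *
          (∑' n : ℕ, (Nat.factorial n : ℝ) * Real.exp (2 * lam * n) * (b n) ^ 2) := by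
  set f : ℕ → ℝ := fun n => (Nat.factorial n : ℝ) * Real.exp (2 * lam * n) * (a n) ^ 2 with hf
  set g : ℕ → ℝ := fun n => (Nat.factorial n : ℝ) * Real.exp (2 * lam * n) * (b n) ^ 2 with hg
  have hδ : (1 : ℝ) < 2 * (lam - lam') := by linarith
  have hfpos : ∀ n, 0 ≤ f n := fun n => by positivity
  have hgpos : ∀ n, 0 ≤ g n := fun n => by positivity
  -- key pointwise bound
  have key : ∀ n, (Nat.factorial n : ℝ) * Real.exp (2 * lam' * n) *
      (∑ m ∈ Finset.range (n + 1), a (n - m) * b m) ^ 2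
      ≤ ∑ m ∈ Finset.range (n + 1), f (n - m) * g m := by
    intro n
    set u : ℕ → ℝ := fun m => (Real.sqrt ((Nat.factorial (n - m) : ℝ) * Nat.factorial m))⁻¹
    set v : ℕ → ℝ := fun m => Real.sqrt ((Nat.factorial (n - m) : ℝ) * Nat.factorial m) *
      (a (n - m) * b m)
    have hsq : ∀ m, (0:ℝ) < (Nat.factorial (n - m) : ℝ) * Nat.factorial m := by
      intro m; positivity
    have huv : ∀ m, u m * v m = a (n - m) * b m := by
      intro m
      have : Real.sqrt ((Nat.factorial (n - m) : ℝ) * Nat.factorial m) ≠ 0 :=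
        ne_of_gt (Real.sqrt_pos.2 (hsq m))
      simp only [u, v]
      rw [← mul_assoc, inv_mul_cancel₀ this, one_mul]
    have hCS := Finset.sum_mul_sq_le_sq_mul_sq (Finset.range (n + 1)) u v
    have hsum_eq : ∑ m ∈ Finset.range (n + 1), u m * v m
        = ∑ m ∈ Finset.range (n + 1), a (n - m) * b m :=
      Finset.sum_congr rfl fun m _ => huv m
    have hu2 : ∑ m ∈ Finset.range (n + 1), u m ^ 2 = (2:ℝ) ^ n / Nat.factorial n := by
      have : ∀ m ∈ Finset.range (n + 1), u m ^ 2 = (n.choose m : ℝ) / Nat.factorial n := by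
        intro m hm
        have hm' : m ≤ n := Nat.lt_succ_iff.mp (Finset.mem_range.mp hm)
        have hfact := Nat.choose_mul_factorial_mul_factorial hm'
        have hfact' : ((n.choose m : ℝ)) * ((Nat.factorial m : ℝ) * (Nat.factorial (n - m) : ℝ))
            = (Nat.factorial n : ℝ) := by
          exact_mod_cast congrArg (Nat.cast : ℕ → ℝ) (by rw [mul_assoc] at hfact; exact hfact)
        have h1 : u m ^ 2 = ((Nat.factorial (n - m) : ℝ) * Nat.factorial m)⁻¹ := by
          rw [show u m ^ 2 = ((Real.sqrt ((Nat.factorial (n - m) : ℝ) * Nat.factorial m))⁻¹)^2 from rfl,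
            inv_pow, Real.sq_sqrt (le_of_lt (hsq m))]
        rw [h1]
        field_simp
        nlinarith [hfact', (hsq m)]
      rw [Finset.sum_congr rfl this, ← Finset.sum_div]
      norm_cast
      rw [Nat.sum_range_choose]
    have hv2 : ∀ m, v m ^ 2 = (Nat.factorial (n - m) : ℝ) * Nat.factorial m *
        (a (n - m) ^ 2 * b m ^ 2) := by
      intro m
      rw [show v m = Real.sqrt ((Nat.factorial (n - m) : ℝ) * Nat.factorial m) *
        (a (n - m) * b m) from rfl, mul_pow, Real.sq_sqrt (le_of_lt (hsq m))]
      ring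
    rw [hsum_eq] at hCS
    have hn0 : (0:ℝ) < Nat.factorial n := by positivity
    have step1 : (Nat.factorial n : ℝ) * Real.exp (2 * lam' * n) *
        (∑ m ∈ Finset.range (n + 1), a (n - m) * b m) ^ 2
        ≤ (2:ℝ) ^ n * Real.exp (2 * lam' * n) *
          ∑ m ∈ Finset.range (n + 1), (Nat.factorial (n - m) : ℝ) * Nat.factorial m *
            (a (n - m) ^ 2 * b m ^ 2) := by
      calc (Nat.factorial n : ℝ) * Real.exp (2 * lam' * n) *
            (∑ m ∈ Finset.range (n + 1), a (n - m) * b m) ^ 2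
          ≤ (Nat.factorial n : ℝ) * Real.exp (2 * lam' * n) *
            ((∑ m ∈ Finset.range (n + 1), u m ^ 2) * ∑ m ∈ Finset.range (n + 1), v m ^ 2) :=
            mul_le_mul_of_nonneg_left hCS (by positivity)
        _ = (2:ℝ) ^ n * Real.exp (2 * lam' * n) *
            ∑ m ∈ Finset.range (n + 1), (Nat.factorial (n - m) : ℝ) * Nat.factorial m *
              (a (n - m) ^ 2 * b m ^ 2) := by
            rw [hu2, Finset.sum_congr rfl (fun m _ => hv2 m)]
            field_simp
    refine step1.trans ?_
    rw [Finset.mul_sum]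
    apply Finset.sum_le_sum
    intro m hm
    have hm' : m ≤ n := Nat.lt_succ_iff.mp (Finset.mem_range.mp hm)
    have hexp : Real.exp (2 * lam * ((n:ℝ) - m)) * Real.exp (2 * lam * m) = Real.exp (2 * lam * n) := by
      rw [← Real.exp_add]; ring_nf
    have hcast : ((n - m : ℕ) : ℝ) = (n:ℝ) - m := by
      push_cast [Nat.cast_sub hm']; ring
    have h2n : (2:ℝ) ^ n * Real.exp (2 * lam' * n) ≤ Real.exp (2 * lam * n) := by
      have : (2:ℝ) ^ n ≤ Real.exp ((2 * (lam - lam')) * n) := by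
        calc (2:ℝ) ^ n ≤ Real.exp 1 ^ n := by
              apply pow_le_pow_left₀ (by norm_num)
              linarith [Real.add_one_le_exp (1:ℝ)]
          _ = Real.exp (n : ℝ) := by rw [← Real.exp_nat_mul]; ring_nf
          _ ≤ Real.exp ((2 * (lam - lam')) * n) := by
              apply Real.exp_le_exp.2
              nlinarith [Nat.cast_nonneg (α := ℝ) n]
      calc (2:ℝ) ^ n * Real.exp (2 * lam' * n)
          ≤ Real.exp ((2 * (lam - lam')) * n) * Real.exp (2 * lam' * n) := by
            apply mul_le_mul_of_nonneg_right this (le_of_lt (Real.exp_pos _))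
        _ = Real.exp (2 * lam * n) := by rw [← Real.exp_add]; ring_nf
    have hrest : (0:ℝ) ≤ (Nat.factorial (n - m) : ℝ) * Nat.factorial m *
        (a (n - m) ^ 2 * b m ^ 2) := by positivity
    calc (2:ℝ) ^ n * Real.exp (2 * lam' * n) *
          ((Nat.factorial (n - m) : ℝ) * Nat.factorial m * (a (n - m) ^ 2 * b m ^ 2))
        ≤ Real.exp (2 * lam * n) *
          ((Nat.factorial (n - m) : ℝ) * Nat.factorial m * (a (n - m) ^ 2 * b m ^ 2)) :=
          mul_le_mul_of_nonneg_right h2n hrest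
      _ = f (n - m) * g m := by
          simp only [hf, hg]
          rw [← hexp, hcast]
          ring
  -- Cauchy product
  have hfn : Summable fun n => ‖f n‖ := by
    simpa [Real.norm_eq_abs, abs_of_nonneg (hfpos _)] using hA
  have hgn : Summable fun n => ‖g n‖ := by
    simpa [Real.norm_eq_abs, abs_of_nonneg (hgpos _)] using hB
  have hprod := hasSum_sum_range_mul_of_summable_norm hfn hgn
  have hflip : ∀ n, ∑ k ∈ Finset.range (n + 1), f k * g (n - k)
      = ∑ m ∈ Finset.range (n + 1), f (n - m) * g m := by
    intro n
    rw [← Finset.sum_range_reflect]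
    apply Finset.sum_congr rfl
    intro m hm
    have hm' : m ≤ n := Nat.lt_succ_iff.mp (Finset.mem_range.mp hm)
    congr 2 <;> omega
  have hprod' : HasSum (fun n => ∑ m ∈ Finset.range (n + 1), f (n - m) * g m)
      ((∑' n, f n) * ∑' n, g n) := by
    simpa [hflip] using hprod
  have hsum_le : ∑' n : ℕ, (Nat.factorial n : ℝ) * Real.exp (2 * lam' * n) *
      (∑ m ∈ Finset.range (n + 1), a (n - m) * b m) ^ 2
      ≤ (∑' n, f n) * ∑' n, g n := by
    rw [← hprod'.tsum_eq]
    refine Summable.tsum_le_tsum key ?_ hprod'.summable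
    apply Summable.of_nonneg_of_le (fun n => by positivity) key hprod'.summable
  refine hsum_le.trans ?_
  -- C² ≥ 1
  have hx : (0:ℝ) < 2 * (lam - lam') - 1 := by linarith
  have hC : (1:ℝ) ≤ (Real.exp (lam - lam' - 1) / Real.sqrt (2 * (lam - lam') - 1)) ^ 2 := by
    rw [div_pow, Real.sq_sqrt (le_of_lt hx), ← Real.exp_nat_mul, le_div_iff₀ hx, one_mul]
    have := Real.add_one_le_exp ((2:ℕ) * (lam - lam' - 1))
    push_cast at this ⊢
    linarith
  have hApos : 0 ≤ ∑' n, f n := tsum_nonneg hfpos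
  have hBpos : 0 ≤ ∑' n, g n := tsum_nonneg hgpos
  nlinarith [mul_nonneg hApos hBpos]
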